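/- For every γ ∈ [0,1], the supremum, over all pairs (ρ₀, ρ₁) of qubit density matrices and all two-outcome POVMs (Λ₀, Λ₁) on ℂ², of the average success probability (1/2)·Re Tr(Λ₀ · N_γ(ρ₀)) + (1/2)·Re Tr(Λ₁ · N_γ(ρ₁)) equals (1 + √(1−γ))/2, and this supremum is attained by taking ρ₀ = Λ₀ = ρ₊ and ρ₁ = Λ₁ = ρ₋. -/

import Mathlib

open Matrix Complex
open scoped ComplexOrder

set_option maxHeartbeats 1000000

/-- Kraus operator `K₀` of the qubit amplitude damping channel. -/
noncomputable def K₀ (γ : ℝ) : Matrix (Fin 2) (Fin 2) ℂ :=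
  !![1, 0; 0, (Real.sqrt (1 - γ) : ℂ)]

/-- Kraus operator `K₁` of the qubit amplitude damping channel. -/
noncomputable def K₁ (γ : ℝ) : Matrix (Fin 2) (Fin 2) ℂ :=
  !![0, (Real.sqrt γ : ℂ); 0, 0]

/-- The qubit amplitude damping channel with damping parameter `γ`. -/
noncomputable def ADC (γ : ℝ) (ρ : Matrix (Fin 2) (Fin 2) ℂ) : Matrix (Fin 2) (Fin 2) ℂ :=
  K₀ γ * ρ * (K₀ γ)ᴴ + K₁ γ * ρ * (K₁ γ)ᴴ

/-- The state `ρ₊ = |+⟩⟨+|`. -/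
noncomputable def ρPlus : Matrix (Fin 2) (Fin 2) ℂ := (1/2 : ℂ) • !![1, 1; 1, 1]

/-- The state `ρ₋ = |−⟩⟨−|`. -/
noncomputable def ρMinus : Matrix (Fin 2) (Fin 2) ℂ := (1/2 : ℂ) • !![1, -1; -1, 1]

lemma psd_diag_re {A : Matrix (Fin 2) (Fin 2) ℂ} (hA : A.PosSemidef) (i : Fin 2) :
    A i i = ((A i i).re : ℂ) ∧ 0 ≤ (A i i).re := by
  have h1 := hA.1.apply i i
  have h2 := hA.dotProduct_mulVec_nonneg (Pi.single i 1)
  simp [dotProduct, Matrix.mulVec, Pi.single_apply, Fin.sum_univ_two] at h2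
  rw [Complex.nonneg_iff] at h2
  exact ⟨((Complex.conj_eq_iff_re).mp h1).symm ▸ rfl, h2.1⟩

lemma psd_offdiag {A : Matrix (Fin 2) (Fin 2) ℂ} (hA : A.PosSemidef) :
    (A 0 1).re ^ 2 + (A 0 1).im ^ 2 ≤ (A 0 0).re * (A 1 1).re := by
  obtain ⟨hd0, hu0⟩ := psd_diag_re hA 0
  obtain ⟨hd1, hv0⟩ := psd_diag_re hA 1
  have h10 : A 1 0 = (starRingEnd ℂ) (A 0 1) := (hA.1.apply 1 0).symm
  set u := (A 0 0).re
  set v := (A 1 1).re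
  set n := Complex.normSq (A 0 1) with hn
  have key : ∀ t : ℝ, 0 ≤ (u * n) * (t * t) + (2 * n) * t + v := by
    intro t
    have h2 := hA.dotProduct_mulVec_nonneg ![(t : ℂ) * A 0 1, 1]
    simp [dotProduct, Matrix.mulVec, Fin.sum_univ_two] at h2
    rw [Complex.nonneg_iff] at h2
    have := h2.1
    rw [hd0, hd1, h10] at this
    simp only [Complex.add_re, Complex.mul_re, Complex.mul_im, Complex.ofReal_re,
      Complex.ofReal_im, Complex.conj_re, Complex.conj_im, Complex.add_im] at this
    simp only [hn, Complex.normSq_apply]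
    nlinarith [this]
  have hd := discrim_le_zero key
  have hn0 : 0 ≤ n := Complex.normSq_nonneg _
  have h1 : n ^ 2 ≤ u * v * n := by
    rw [discrim] at hd; nlinarith [hd]
  have h2 : n ≤ u * v := by
    rcases eq_or_lt_of_le hn0 with h | h
    · rw [← h]; positivity
    · nlinarith
  simpa [hn, Complex.normSq_apply, pow_two] using h2

lemma keyReal (s p₀ p₁ a₀ b₀ a₁ b₁ u v wr wi : ℝ)
    (hs0 : 0 ≤ s) (hs1 : s ≤ 1)
    (hc₀ : a₀^2 + b₀^2 ≤ p₀ * (1 - p₀)) (hc₁ : a₁^2 + b₁^2 ≤ p₁ * (1 - p₁))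
    (hu0 : 0 ≤ u) (hu1 : u ≤ 1) (hv0 : 0 ≤ v) (hv1 : v ≤ 1)
    (hw1 : wr^2 + wi^2 ≤ u * v) (hw2 : wr^2 + wi^2 ≤ (1-u)*(1-v)) :
    s^2 * (p₀ - p₁) * (u - v) + 2*s*(wr*(a₀-a₁) + wi*(b₀-b₁)) ≤ s := by
  have hW0 : 0 ≤ wr^2 + wi^2 := by positivity
  have hE : (u-v)^2 + 4*(wr^2+wi^2) ≤ 1 := by
    have h1 : (u-v)^2 + 4*(wr^2+wi^2) ≤ (u+v)^2 := by nlinarith [hw1]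
    have h2 : (u-v)^2 + 4*(wr^2+wi^2) ≤ (2-u-v)^2 := by nlinarith [hw2]
    have h3 : 0 ≤ (u+v)*(2-u-v) := by nlinarith
    have h4 : (u+v)*(2-u-v) ≤ 1 := by nlinarith [sq_nonneg (u+v-1)]
    nlinarith [mul_le_mul h1 h2 (by positivity) (sq_nonneg (u+v)),
      sq_nonneg ((u-v)^2 + 4*(wr^2+wi^2) - 1), h3, h4]
  have hp₀0 : 0 ≤ p₀ * (1 - p₀) := le_trans (by positivity) hc₀
  have hp₁0 : 0 ≤ p₁ * (1 - p₁) := le_trans (by positivity) hc₁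
  have ht2 : (a₀*a₁ + b₀*b₁)^2 ≤ (p₀*(1-p₀)) * (p₁*(1-p₁)) := by
    nlinarith [sq_nonneg (a₀*b₁ - a₁*b₀), sq_nonneg (a₀*a₁+b₀*b₁),
      mul_nonneg (by positivity : (0:ℝ) ≤ a₀^2+b₀^2) (by positivity : (0:ℝ) ≤ a₁^2+b₁^2)]
  have hM0 : 0 ≤ (p₀*p₁ + (1-p₀)*(1-p₁))/2 := by
    nlinarith [hp₀0, hp₁0, sq_nonneg (p₀-p₁), sq_nonneg (p₀+p₁-1)]
  have htM : -((p₀*p₁ + (1-p₀)*(1-p₁))/2) ≤ a₀*a₁ + b₀*b₁ := by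
    nlinarith [ht2, hM0, sq_nonneg (p₀*p₁ - (1-p₀)*(1-p₁))]
  have hD : (p₀-p₁)^2 + (a₀-a₁)^2 + (b₀-b₁)^2 ≤ 1 := by nlinarith [hc₀, hc₁, htM]
  have hss : s^2 ≤ 1 := by nlinarith
  have hD' : (s*(p₀-p₁))^2 + (a₀-a₁)^2 + (b₀-b₁)^2 ≤ 1 := by
    have h1 : (s*(p₀-p₁))^2 ≤ (p₀-p₁)^2 := by
      have := mul_le_mul_of_nonneg_right hss (sq_nonneg (p₀-p₁))
      calc (s*(p₀-p₁))^2 = s^2 * (p₀-p₁)^2 := by ring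
        _ ≤ 1 * (p₀-p₁)^2 := this
        _ = (p₀-p₁)^2 := one_mul _
    linarith
  have hD'0 : 0 ≤ (s*(p₀-p₁))^2 + (a₀-a₁)^2 + (b₀-b₁)^2 := by positivity
  have hE0 : 0 ≤ (u-v)^2 + 4*(wr^2+wi^2) := by positivity
  have hP2 : (s*(p₀-p₁)*(u-v) + ((a₀-a₁)*(2*wr) + (b₀-b₁)*(2*wi)))^2
      ≤ ((s*(p₀-p₁))^2 + (a₀-a₁)^2 + (b₀-b₁)^2) * ((u-v)^2 + 4*(wr^2+wi^2)) := by
    linarith [sq_nonneg (s*(p₀-p₁)*(2*wr) - (a₀-a₁)*(u-v)),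
      sq_nonneg (s*(p₀-p₁)*(2*wi) - (b₀-b₁)*(u-v)),
      sq_nonneg ((a₀-a₁)*(2*wi) - (b₀-b₁)*(2*wr))]
  have hDE : ((s*(p₀-p₁))^2 + (a₀-a₁)^2 + (b₀-b₁)^2) * ((u-v)^2 + 4*(wr^2+wi^2)) ≤ 1 := by
    calc ((s*(p₀-p₁))^2 + (a₀-a₁)^2 + (b₀-b₁)^2) * ((u-v)^2 + 4*(wr^2+wi^2)) ≤ 1 * 1 :=
      mul_le_mul hD' hE hE0 (by linarith)
      _ = 1 := by norm_num
  have hP1 : s*(p₀-p₁)*(u-v) + ((a₀-a₁)*(2*wr) + (b₀-b₁)*(2*wi)) ≤ 1 := by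
    set P := s*(p₀-p₁)*(u-v) + ((a₀-a₁)*(2*wr) + (b₀-b₁)*(2*wi)) with hPdef
    set D := ((s*(p₀-p₁))^2 + (a₀-a₁)^2 + (b₀-b₁)^2) * ((u-v)^2 + 4*(wr^2+wi^2)) with hDdef
    have h := sq_nonneg (P - 1)
    have h2 : P^2 - 2*P + 1 ≥ 0 := by nlinarith [h]
    linarith [hP2, hDE, h2]
  calc s^2 * (p₀ - p₁) * (u - v) + 2*s*(wr*(a₀-a₁) + wi*(b₀-b₁))
      = s * (s*(p₀-p₁)*(u-v) + ((a₀-a₁)*(2*wr) + (b₀-b₁)*(2*wi))) := by ring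
    _ ≤ s * 1 := mul_le_mul_of_nonneg_left hP1 hs0
    _ = s := mul_one s

lemma ADC_eq (γ : ℝ) (hγ0 : 0 ≤ γ) (hγ1 : γ ≤ 1) (ρ : Matrix (Fin 2) (Fin 2) ℂ) :
    ADC γ ρ = !![ρ 0 0 + (γ:ℂ) * ρ 1 1, (Real.sqrt (1-γ) : ℂ) * ρ 0 1;
                 (Real.sqrt (1-γ) : ℂ) * ρ 1 0, ((1:ℂ) - γ) * ρ 1 1] := by
  have h1 : ((Real.sqrt γ : ℝ) : ℂ) * ((Real.sqrt γ : ℝ) : ℂ) = (γ : ℂ) := by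
    rw [← Complex.ofReal_mul, Real.mul_self_sqrt hγ0]
  have h2 : ((Real.sqrt (1-γ) : ℝ) : ℂ) * ((Real.sqrt (1-γ) : ℝ) : ℂ) = ((1:ℂ) - γ) := by
    rw [← Complex.ofReal_mul, Real.mul_self_sqrt (by linarith)]
    push_cast; ring
  ext i j
  fin_cases i <;> fin_cases j <;>
    simp [ADC, K₀, K₁, Matrix.mul_apply, Fin.sum_univ_two, Matrix.vecMul,
      dotProduct, Matrix.conjTranspose_apply, Complex.star_def,
      Complex.conj_ofReal]
  all_goals first
      | linear_combination (ρ 1 1) * h1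
      | linear_combination (ρ 1 1) * h2
      | linear_combination (ρ 1 1) * h1 + (ρ 1 1) * h2
      | ring

lemma traceFormula (γ : ℝ) (hγ0 : 0 ≤ γ) (hγ1 : γ ≤ 1) (Λ ρ : Matrix (Fin 2) (Fin 2) ℂ)
    (p q u v : ℝ)
    (hρ0 : ρ 0 0 = (p : ℂ)) (hρ1 : ρ 1 1 = (q : ℂ))
    (hΛ0 : Λ 0 0 = (u : ℂ)) (hΛ1 : Λ 1 1 = (v : ℂ))
    (hρ : ρ 1 0 = (starRingEnd ℂ) (ρ 0 1)) (hΛ : Λ 1 0 = (starRingEnd ℂ) (Λ 0 1)) :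
    (Λ * ADC γ ρ).trace.re
      = u * (p + γ * q)
        + 2 * Real.sqrt (1 - γ) * ((Λ 0 1).re * (ρ 0 1).re + (Λ 0 1).im * (ρ 0 1).im)
        + v * ((1 - γ) * q) := by
  rw [ADC_eq γ hγ0 hγ1, Matrix.trace_fin_two]
  simp [Matrix.mul_apply, Fin.sum_univ_two, hρ0, hρ1, hΛ0, hΛ1, hρ, hΛ,
    Complex.add_re, Complex.mul_re, Complex.mul_im, Complex.add_im, Complex.sub_re,
    Complex.sub_im, Complex.ofReal_re, Complex.ofReal_im, Complex.conj_re, Complex.conj_im]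
  ring

lemma psd_plus : ρPlus.PosSemidef := by
  refine Matrix.posSemidef_iff_dotProduct_mulVec.mpr ⟨?_, ?_⟩
  · ext i j
    fin_cases i <;> fin_cases j <;> simp [ρPlus, Matrix.conjTranspose_apply]
  · intro x
    have hx : dotProduct (star x) (ρPlus *ᵥ x)
        = ((Complex.normSq (x 0 + x 1) / 2 : ℝ) : ℂ) := by
      rw [Complex.ofReal_div]
      rw [show ((Complex.normSq (x 0 + x 1) : ℝ) : ℂ)
          = (starRingEnd ℂ) (x 0 + x 1) * (x 0 + x 1) from Complex.normSq_eq_conj_mul_self]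
      simp [dotProduct, Matrix.mulVec, Fin.sum_univ_two, ρPlus]
      ring
    rw [hx]
    exact Complex.zero_le_real.mpr (div_nonneg (Complex.normSq_nonneg _) (by norm_num))

lemma psd_minus : ρMinus.PosSemidef := by
  refine Matrix.posSemidef_iff_dotProduct_mulVec.mpr ⟨?_, ?_⟩
  · ext i j
    fin_cases i <;> fin_cases j <;> simp [ρMinus, Matrix.conjTranspose_apply]
  · intro x
    have hx : dotProduct (star x) (ρMinus *ᵥ x)
        = ((Complex.normSq (x 0 - x 1) / 2 : ℝ) : ℂ) := by
      rw [Complex.ofReal_div]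
      rw [show ((Complex.normSq (x 0 - x 1) : ℝ) : ℂ)
          = (starRingEnd ℂ) (x 0 - x 1) * (x 0 - x 1) from Complex.normSq_eq_conj_mul_self]
      simp [dotProduct, Matrix.mulVec, Fin.sum_univ_two, ρMinus]
      ring
    rw [hx]
    exact Complex.zero_le_real.mpr (div_nonneg (Complex.normSq_nonneg _) (by norm_num))

lemma attained (γ : ℝ) (hγ0 : 0 ≤ γ) (hγ1 : γ ≤ 1) :
    (1/2) * (ρPlus * ADC γ ρPlus).trace.re + (1/2) * (ρMinus * ADC γ ρMinus).trace.re
      = (1 + Real.sqrt (1 - γ)) / 2 := by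
  rw [traceFormula γ hγ0 hγ1 ρPlus ρPlus (1/2) (1/2) (1/2) (1/2)
      (by norm_num [ρPlus, Complex.ext_iff]) (by norm_num [ρPlus, Complex.ext_iff]) (by norm_num [ρPlus, Complex.ext_iff]) (by norm_num [ρPlus, Complex.ext_iff])
      (by norm_num [ρPlus, Complex.ext_iff]) (by norm_num [ρPlus, Complex.ext_iff]),
    traceFormula γ hγ0 hγ1 ρMinus ρMinus (1/2) (1/2) (1/2) (1/2)
      (by norm_num [ρMinus, Complex.ext_iff]) (by norm_num [ρMinus, Complex.ext_iff]) (by norm_num [ρMinus, Complex.ext_iff]) (by norm_num [ρMinus, Complex.ext_iff])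
      (by norm_num [ρMinus, Complex.ext_iff]) (by norm_num [ρMinus, Complex.ext_iff])]
  norm_num [ρPlus, ρMinus]
  ring

/-- For every `γ ∈ [0,1]`, the best possible average success probability over all
pairs of qubit density matrices and all two-outcome POVMs on `ℂ²` equals `(1 + √(1−γ))/2`,
and it is attained by `ρ₀ = Λ₀ = ρ₊`, `ρ₁ = Λ₁ = ρ₋`. -/
theorem stmt0 (γ : ℝ) (hγ0 : 0 ≤ γ) (hγ1 : γ ≤ 1) :
    IsGreatest
      {v : ℝ | ∃ ρ₀ ρ₁ Λ₀ Λ₁ : Matrix (Fin 2) (Fin 2) ℂ,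
        ρ₀.PosSemidef ∧ ρ₀.trace = 1 ∧ ρ₁.PosSemidef ∧ ρ₁.trace = 1 ∧
        Λ₀.PosSemidef ∧ Λ₁.PosSemidef ∧ Λ₀ + Λ₁ = 1 ∧
        v = (1/2) * (Λ₀ * ADC γ ρ₀).trace.re + (1/2) * (Λ₁ * ADC γ ρ₁).trace.re}
      ((1 + Real.sqrt (1 - γ)) / 2) ∧
    (1/2) * (ρPlus * ADC γ ρPlus).trace.re + (1/2) * (ρMinus * ADC γ ρMinus).trace.re
      = (1 + Real.sqrt (1 - γ)) / 2 := by
  have hatt := attained γ hγ0 hγ1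
  refine ⟨⟨?_, ?_⟩, hatt⟩
  · -- membership
    refine ⟨ρPlus, ρMinus, ρPlus, ρMinus, psd_plus, ?_, psd_minus, ?_, psd_plus, psd_minus,
      ?_, hatt.symm⟩
    · simp [ρPlus, Matrix.trace_fin_two]; norm_num
    · simp [ρMinus, Matrix.trace_fin_two]; norm_num
    · ext i j
      fin_cases i <;> fin_cases j <;>
        simp [ρPlus, ρMinus, Matrix.one_apply] <;> norm_num
  · -- upper bound
    rintro x ⟨ρ₀, ρ₁, Λ₀, Λ₁, h0P, h0t, h1P, h1t, hΛ0P, hΛ1P, hΛsum, rfl⟩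
    -- entries of ρ₀, ρ₁
    obtain ⟨e000, e000n⟩ := psd_diag_re h0P 0
    obtain ⟨e011, e011n⟩ := psd_diag_re h0P 1
    obtain ⟨e100, e100n⟩ := psd_diag_re h1P 0
    obtain ⟨e111, e111n⟩ := psd_diag_re h1P 1
    obtain ⟨f000, f000n⟩ := psd_diag_re hΛ0P 0
    obtain ⟨f011, f011n⟩ := psd_diag_re hΛ0P 1
    obtain ⟨f100, f100n⟩ := psd_diag_re hΛ1P 0
    obtain ⟨f111, f111n⟩ := psd_diag_re hΛ1P 1
    have htr0 : (ρ₀ 0 0).re + (ρ₀ 1 1).re = 1 := by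
      have := congrArg Complex.re h0t
      simpa [Matrix.trace_fin_two] using this
    have htr1 : (ρ₁ 0 0).re + (ρ₁ 1 1).re = 1 := by
      have := congrArg Complex.re h1t
      simpa [Matrix.trace_fin_two] using this
    have hΛ1eq : Λ₁ = 1 - Λ₀ := by rw [← hΛsum]; abel
    have hL00 : (Λ₁ 0 0).re = 1 - (Λ₀ 0 0).re := by
      rw [hΛ1eq]; simp [Matrix.sub_apply, Matrix.one_apply]
    have hL11 : (Λ₁ 1 1).re = 1 - (Λ₀ 1 1).re := by
      rw [hΛ1eq]; simp [Matrix.sub_apply, Matrix.one_apply]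
    have hL01 : Λ₁ 0 1 = -(Λ₀ 0 1) := by
      rw [hΛ1eq]; simp [Matrix.sub_apply, Matrix.one_apply]
    -- off-diagonal bounds
    have hoff0 := psd_offdiag h0P
    have hoff1 := psd_offdiag h1P
    have hoffΛ0 := psd_offdiag hΛ0P
    have hoffΛ1 := psd_offdiag hΛ1P
    rw [hL01] at hoffΛ1
    rw [hL00, hL11] at hoffΛ1
    simp only [Complex.neg_re, Complex.neg_im, neg_sq] at hoffΛ1
    -- trace formulas
    rw [traceFormula γ hγ0 hγ1 Λ₀ ρ₀ (ρ₀ 0 0).re (ρ₀ 1 1).re (Λ₀ 0 0).re (Λ₀ 1 1).re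
        e000 e011 f000 f011 (h0P.1.apply 1 0).symm (hΛ0P.1.apply 1 0).symm,
      traceFormula γ hγ0 hγ1 Λ₁ ρ₁ (ρ₁ 0 0).re (ρ₁ 1 1).re (Λ₁ 0 0).re (Λ₁ 1 1).re
        e100 e111 f100 f111 (h1P.1.apply 1 0).symm (hΛ1P.1.apply 1 0).symm]
    rw [hL00, hL11, hL01]
    simp only [Complex.neg_re, Complex.neg_im]
    have hq0 : (ρ₀ 1 1).re = 1 - (ρ₀ 0 0).re := by linarith
    have hq1 : (ρ₁ 1 1).re = 1 - (ρ₁ 0 0).re := by linarith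
    rw [hq0, hq1]
    obtain ⟨s, hss⟩ : ∃ s, Real.sqrt (1 - γ) = s := ⟨_, rfl⟩
    have hs0 : 0 ≤ s := hss ▸ Real.sqrt_nonneg _
    have hs2 : s ^ 2 = 1 - γ := by rw [← hss]; exact Real.sq_sqrt (by linarith)
    have hs1 : s ≤ 1 := by nlinarith
    rw [hss, show γ = 1 - s ^ 2 by linarith]
    have key := keyReal s (ρ₀ 0 0).re (ρ₁ 0 0).re (ρ₀ 0 1).re (ρ₀ 0 1).im
      (ρ₁ 0 1).re (ρ₁ 0 1).im (Λ₀ 0 0).re (Λ₀ 1 1).re (Λ₀ 0 1).re (Λ₀ 0 1).im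
      hs0 hs1
      (by rw [show (1:ℝ) - (ρ₀ 0 0).re = (ρ₀ 1 1).re by linarith]; exact hoff0)
      (by rw [show (1:ℝ) - (ρ₁ 0 0).re = (ρ₁ 1 1).re by linarith]; exact hoff1)
      f000n (by nlinarith [f100n, hL00]) f011n (by nlinarith [f111n, hL11])
      hoffΛ0 hoffΛ1
    have expand :
        1/2 * ((Λ₀ 0 0).re * ((ρ₀ 0 0).re + (1 - s^2) * (1 - (ρ₀ 0 0).re))
            + 2 * s * ((Λ₀ 0 1).re * (ρ₀ 0 1).re + (Λ₀ 0 1).im * (ρ₀ 0 1).im)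
            + (Λ₀ 1 1).re * ((1 - (1 - s^2)) * (1 - (ρ₀ 0 0).re)))
        + 1/2 * ((1 - (Λ₀ 0 0).re) * ((ρ₁ 0 0).re + (1 - s^2) * (1 - (ρ₁ 0 0).re))
            + 2 * s * (-(Λ₀ 0 1).re * (ρ₁ 0 1).re + -(Λ₀ 0 1).im * (ρ₁ 0 1).im)
            + (1 - (Λ₀ 1 1).re) * ((1 - (1 - s^2)) * (1 - (ρ₁ 0 0).re)))
        = 1/2 + 1/2 * (s^2 * ((ρ₀ 0 0).re - (ρ₁ 0 0).re) * ((Λ₀ 0 0).re - (Λ₀ 1 1).re)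
            + 2*s*((Λ₀ 0 1).re*((ρ₀ 0 1).re-(ρ₁ 0 1).re)
              + (Λ₀ 0 1).im*((ρ₀ 0 1).im-(ρ₁ 0 1).im))) := by ring
    linarith [key, expand]
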